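/- Let M be an alternative O-bimodule with M = O·A(M) and Re as above. Then Re([p,q,x]) = 0 and Re([p,x]) = 0 for all p,q ∈ O and x ∈ M, and Re((pq)x) = Re((qx)p) = Re(x(pq)). -/

import Mathlib

noncomputable section

open scoped Quaternion

/-- The octonions, built from pairs of quaternions via the Cayley–Dickson construction. -/
def Octonion : Type := ℍ[ℝ] × ℍ[ℝ]

namespace Octonion

def mk' (a b : ℍ[ℝ]) : Octonion := Prod.mk a b
def q1 (x : Octonion) : ℍ[ℝ] := Prod.fst x
def q2 (x : Octonion) : ℍ[ℝ] := Prod.snd x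

instance : AddCommGroup Octonion := inferInstanceAs (AddCommGroup (ℍ[ℝ] × ℍ[ℝ]))
instance : Module ℝ Octonion := inferInstanceAs (Module ℝ (ℍ[ℝ] × ℍ[ℝ]))
instance : One Octonion := ⟨mk' 1 0⟩
instance : Mul Octonion :=
  ⟨fun x y => mk' (q1 x * q1 y - star (q2 y) * q2 x) (q2 y * q1 x + q2 x * star (q1 y))⟩

/-- Octonion conjugation. -/
def conj (x : Octonion) : Octonion := mk' (star (q1 x)) (-(q2 x))

/-- The real part of an octonion. -/
def re (x : Octonion) : ℝ := (q1 x).re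

/-- The standard basis `e 0 = 1, e 1, …, e 7` of the octonions. -/
def e : Fin 8 → Octonion :=
  ![mk' 1 0, mk' ⟨0,1,0,0⟩ 0, mk' ⟨0,0,1,0⟩ 0, mk' ⟨0,0,0,1⟩ 0,
    mk' 0 1, mk' 0 ⟨0,1,0,0⟩, mk' 0 ⟨0,0,1,0⟩, mk' 0 ⟨0,0,0,1⟩]

/-- The coordinates of an octonion with respect to the standard basis. -/
def coord (x : Octonion) : Fin 8 → ℝ :=
  ![(q1 x).re, (q1 x).imI, (q1 x).imJ, (q1 x).imK,
    (q2 x).re, (q2 x).imI, (q2 x).imJ, (q2 x).imK]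

end Octonion

namespace Octonion

/-! ### Auxiliary lemmas about octonion arithmetic -/

lemma mul_def' (x y : Octonion) :
    x * y = mk' (q1 x * q1 y - star (q2 y) * q2 x) (q2 y * q1 x + q2 x * star (q1 y)) := rfl
@[simp] lemma q1_mk' (a b : ℍ[ℝ]) : q1 (mk' a b) = a := rfl
@[simp] lemma q2_mk' (a b : ℍ[ℝ]) : q2 (mk' a b) = b := rfl
lemma one_def : (1 : Octonion) = mk' 1 0 := rfl
lemma ext' {x y : Octonion} (h1 : q1 x = q1 y) (h2 : q2 x = q2 y) : x = y := Prod.ext h1 h2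
@[simp] lemma q1_add (x y : Octonion) : q1 (x + y) = q1 x + q1 y := rfl
@[simp] lemma q2_add (x y : Octonion) : q2 (x + y) = q2 x + q2 y := rfl
@[simp] lemma q1_sub (x y : Octonion) : q1 (x - y) = q1 x - q1 y := rfl
@[simp] lemma q2_sub (x y : Octonion) : q2 (x - y) = q2 x - q2 y := rfl
@[simp] lemma q1_smul (r : ℝ) (x : Octonion) : q1 (r • x) = r • q1 x := rfl
@[simp] lemma q2_smul (r : ℝ) (x : Octonion) : q2 (r • x) = r • q2 x := rfl
@[simp] lemma q1_neg (x : Octonion) : q1 (-x) = -q1 x := rfl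
@[simp] lemma q2_neg (x : Octonion) : q2 (-x) = -q2 x := rfl
lemma re_def (x : Octonion) : re x = (q1 x).re := rfl
def qi : ℍ[ℝ] := ⟨0,1,0,0⟩
@[simp] lemma qi_re : qi.re = 0 := rfl
@[simp] lemma qi_imI : qi.imI = 1 := rfl
@[simp] lemma qi_imJ : qi.imJ = 0 := rfl
@[simp] lemma qi_imK : qi.imK = 0 := rfl
def qj : ℍ[ℝ] := ⟨0,0,1,0⟩
@[simp] lemma qj_re : qj.re = 0 := rfl
@[simp] lemma qj_imI : qj.imI = 0 := rfl
@[simp] lemma qj_imJ : qj.imJ = 1 := rfl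
@[simp] lemma qj_imK : qj.imK = 0 := rfl
def qk : ℍ[ℝ] := ⟨0,0,0,1⟩
@[simp] lemma qk_re : qk.re = 0 := rfl
@[simp] lemma qk_imI : qk.imI = 0 := rfl
@[simp] lemma qk_imJ : qk.imJ = 0 := rfl
@[simp] lemma qk_imK : qk.imK = 1 := rfl
lemma e_0 : e 0 = mk' 1 0 := rfl
lemma e_1 : e 1 = mk' qi 0 := rfl
lemma e_2 : e 2 = mk' qj 0 := rfl
lemma e_3 : e 3 = mk' qk 0 := rfl
lemma e_4 : e 4 = mk' 0 1 := rfl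
lemma e_5 : e 5 = mk' 0 qi := rfl
lemma e_6 : e 6 = mk' 0 qj := rfl
lemma e_7 : e 7 = mk' 0 qk := rfl
lemma e_zero_eq_one : e 0 = 1 := rfl

lemma re_mul_comm (x y : Octonion) : re (x * y) = re (y * x) := by
  simp [re, mul_def', Quaternion.re_mul, Quaternion.re_star, Quaternion.imI_star,
    Quaternion.imJ_star, Quaternion.imK_star, Quaternion.re_sub]
  ring

lemma re_mul_assoc (x y z : Octonion) : re ((x * y) * z) = re (x * (y * z)) := by
  simp [re, mul_def', Quaternion.re_mul, Quaternion.imI_mul, Quaternion.imJ_mul,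
    Quaternion.imK_mul, Quaternion.re_star, Quaternion.imI_star, Quaternion.imJ_star,
    Quaternion.imK_star, Quaternion.re_sub, Quaternion.imI_sub, Quaternion.imJ_sub,
    Quaternion.imK_sub, Quaternion.re_add, Quaternion.imI_add, Quaternion.imJ_add,
    Quaternion.imK_add]
  ring

lemma key_sum (z : Octonion) :
    (∑ i : Fin 7, (e i.succ * z) * e i.succ) = (5:ℝ) • z - (12 * re z) • 1 := by
  rw [Fin.sum_univ_seven,
    show ((0:Fin 7).succ = 1) from rfl, show ((1:Fin 7).succ = 2) from rfl,
    show ((2:Fin 7).succ = 3) from rfl, show ((3:Fin 7).succ = 4) from rfl,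
    show ((4:Fin 7).succ = 5) from rfl, show ((5:Fin 7).succ = 6) from rfl,
    show ((6:Fin 7).succ = 7) from rfl, e_1, e_2, e_3, e_4, e_5, e_6, e_7]
  apply ext' <;>
  · simp only [mul_def', one_def, re_def, q1_mk', q2_mk', q1_add, q2_add, q1_sub, q2_sub,
      q1_smul, q2_smul]
    ext <;>
    · simp [Quaternion.ext_iff, QuaternionAlgebra.ext_iff, smul_eq_mul]
      ring

lemma decomp (x : Octonion) : x = ∑ j : Fin 8, coord x j • e j := by
  rw [Fin.sum_univ_eight, e_0, e_1, e_2, e_3, e_4, e_5, e_6, e_7,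
    show coord x 0 = (q1 x).re from rfl, show coord x 1 = (q1 x).imI from rfl,
    show coord x 2 = (q1 x).imJ from rfl, show coord x 3 = (q1 x).imK from rfl,
    show coord x 4 = (q2 x).re from rfl, show coord x 5 = (q2 x).imI from rfl,
    show coord x 6 = (q2 x).imJ from rfl, show coord x 7 = (q2 x).imK from rfl]
  apply ext' <;>
  · simp only [q1_add, q2_add, q1_smul, q2_smul, q1_mk', q2_mk']
    ext <;>
    · simp [smul_eq_mul]

/-! ### Basis associators spanning the imaginary octonions -/

lemma trip1a : (e 2 * e 5) * e 6 = e 1 := by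
  apply ext' <;> (simp only [mul_def', e_1, e_2, e_5, e_6, q1_mk', q2_mk']; ext <;> simp)
lemma trip1b : e 2 * (e 5 * e 6) = -(e 1) := by
  apply ext' <;> (simp only [mul_def', e_1, e_2, e_5, e_6, q1_mk', q2_mk', q1_neg, q2_neg]; ext <;> simp)
lemma trip2a : (e 1 * e 4) * e 7 = e 2 := by
  apply ext' <;> (simp only [mul_def', e_1, e_2, e_4, e_7, q1_mk', q2_mk']; ext <;> simp)
lemma trip2b : e 1 * (e 4 * e 7) = -(e 2) := by
  apply ext' <;> (simp only [mul_def', e_1, e_2, e_4, e_7, q1_mk', q2_mk', q1_neg, q2_neg]; ext <;> simp)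
lemma trip3a : (e 1 * e 6) * e 4 = e 3 := by
  apply ext' <;> (simp only [mul_def', e_1, e_3, e_6, e_4, q1_mk', q2_mk']; ext <;> simp)
lemma trip3b : e 1 * (e 6 * e 4) = -(e 3) := by
  apply ext' <;> (simp only [mul_def', e_1, e_3, e_6, e_4, q1_mk', q2_mk', q1_neg, q2_neg]; ext <;> simp)
lemma trip4a : (e 1 * e 3) * e 6 = e 4 := by
  apply ext' <;> (simp only [mul_def', e_1, e_3, e_6, e_4, q1_mk', q2_mk']; ext <;> simp)
lemma trip4b : e 1 * (e 3 * e 6) = -(e 4) := by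
  apply ext' <;> (simp only [mul_def', e_1, e_3, e_6, e_4, q1_mk', q2_mk', q1_neg, q2_neg]; ext <;> simp)
lemma trip5a : (e 1 * e 2) * e 6 = e 5 := by
  apply ext' <;> (simp only [mul_def', e_1, e_2, e_6, e_5, q1_mk', q2_mk']; ext <;> simp)
lemma trip5b : e 1 * (e 2 * e 6) = -(e 5) := by
  apply ext' <;> (simp only [mul_def', e_1, e_2, e_6, e_5, q1_mk', q2_mk', q1_neg, q2_neg]; ext <;> simp)
lemma trip6a : (e 1 * e 4) * e 3 = e 6 := by
  apply ext' <;> (simp only [mul_def', e_1, e_4, e_3, e_6, q1_mk', q2_mk']; ext <;> simp)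
lemma trip6b : e 1 * (e 4 * e 3) = -(e 6) := by
  apply ext' <;> (simp only [mul_def', e_1, e_4, e_3, e_6, q1_mk', q2_mk', q1_neg, q2_neg]; ext <;> simp)
lemma trip7a : (e 1 * e 2) * e 4 = e 7 := by
  apply ext' <;> (simp only [mul_def', e_1, e_2, e_4, e_7, q1_mk', q2_mk']; ext <;> simp)
lemma trip7b : e 1 * (e 2 * e 4) = -(e 7) := by
  apply ext' <;> (simp only [mul_def', e_1, e_2, e_4, e_7, q1_mk', q2_mk', q1_neg, q2_neg]; ext <;> simp)

end Octonion

open Octonion in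
/-- In an alternative `𝕆`-bimodule `M` with `M = 𝕆·A(M)`:
`Re [p,q,x] = 0`, `Re [p,x] = 0`, and `Re((pq)x) = Re((qx)p) = Re(x(pq))`. -/
theorem octonion_bimodule_re_of_associator_commutator
    {M : Type*} [AddCommGroup M] [Module ℝ M]
    (L R : Octonion →ₗ[ℝ] M →ₗ[ℝ] M)
    (hL1 : ∀ m : M, L 1 m = m) (hR1 : ∀ m : M, R 1 m = m)
    -- `[p,q,m] = [q,m,p]`
    (hLM : ∀ (p q : Octonion) (m : M),
      L (p * q) m - L p (L q m) = R p (L q m) - L q (R p m))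
    -- `[q,m,p] = [m,p,q]`
    (hMR : ∀ (p q : Octonion) (m : M),
      R p (L q m) - L q (R p m) = R q (R p m) - R (p * q) m)
    -- `M = 𝕆 · A(M)`
    (hspan : ∀ m : M, m ∈ Submodule.span ℝ
      {y : M | ∃ (p : Octonion) (x : M),
        (∀ a b : Octonion, L (a * b) x = L a (L b x)) ∧ y = L p x})
    (ReM : M → M)
    (hRe : ∀ x : M, ReM x
      = (5 / 12 : ℝ) • x
        - (1 / 12 : ℝ) • ∑ i : Fin 7, R (e i.succ) (L (e i.succ) x)) :
    ∀ (p q : Octonion) (x : M),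
      ReM (L (p * q) x - L p (L q x)) = 0 ∧
      ReM (L p x - R p x) = 0 ∧
      ReM (L (p * q) x) = ReM (R p (L q x)) ∧
      ReM (R p (L q x)) = ReM (R (p * q) x) := by
  -- linearity of `ReM`
  have hReAdd : ∀ x y : M, ReM (x + y) = ReM x + ReM y := by
    intro x y
    simp only [hRe, map_add, smul_add, Finset.sum_add_distrib]
    abel
  have hReSmul : ∀ (r : ℝ) (x : M), ReM (r • x) = r • ReM x := by
    intro r x
    simp only [hRe, map_smul, ← Finset.smul_sum, smul_sub, smul_smul, mul_comm]
  have hReZero : ReM 0 = 0 := by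
    simp [hRe]
  have hReSub : ∀ x y : M, ReM (x - y) = ReM x - ReM y := by
    intro x y
    have h1 := hReAdd (x - y) y
    rw [sub_add_cancel] at h1
    rw [h1]; abel
  -- the key computation on generators
  have key : ∀ (m : M), (∀ a b : Octonion, L (a * b) m = L a (L b m)) →
      ∀ (c p q : Octonion),
      ReM (L (p * q) (L c m) - L p (L q (L c m))) = 0 ∧
      ReM (L p (L c m) - R p (L c m)) = 0 ∧
      ReM (L (p * q) (L c m)) = ReM (R p (L q (L c m))) ∧
      ReM (R p (L q (L c m))) = ReM (R (p * q) (L c m)) := by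
    intro m h c p q
    have hRL : ∀ p q : Octonion, R p (L q m) = L q (R p m) := by
      intro p q
      have h1 := hLM p q m
      rw [h p q, sub_self] at h1
      exact sub_eq_zero.mp h1.symm
    have hRR : ∀ p q : Octonion, R q (R p m) = R (p * q) m := by
      intro p q
      have h1 := hMR p q m
      rw [hRL p q, sub_self] at h1
      exact sub_eq_zero.mp h1.symm
    have hLu : ∀ b a c : Octonion,
        L b (R c (L a m)) = R c (L (b * a) m) - L ((c * b) * a) m + L (c * (b * a)) m := by
      intro b a c
      have h2 := hLM c b (L a m)
      rw [← h b a, ← h (c * b) a, ← h c (b * a)] at h2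
      have h3 : L b (R c (L a m))
          = R c (L (b * a) m) - (L ((c * b) * a) m - L (c * (b * a)) m) := by
        rw [h2]; abel
      rw [h3]; abel
    have hRu : ∀ Q a P : Octonion,
        R Q (R P (L a m)) = R (P * Q) (L a m) + L ((P * Q) * a) m - L (P * (Q * a)) m := by
      intro Q a P
      have h4 := hMR P Q (L a m)
      rw [← h Q a, hLu Q a P] at h4
      have h5 : R Q (R P (L a m))
          = R (P * Q) (L a m)
            + (R P (L (Q * a) m) - (R P (L (Q * a) m) - L ((P * Q) * a) m + L (P * (Q * a)) m)) := by
        rw [h4]; abel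
      rw [h5]; abel
    have hstar : ∀ c p q : Octonion,
        L ((c * p) * q) m - L (c * (p * q)) m = R ((c * p) * q) m - R (c * (p * q)) m := by
      intro c p q
      have h5 := hMR p q (R c m)
      rw [← hRL c q, hRu p q c, hRR c p, ← hRL (c * p) q, hRR (c * p) q, hRR c (p * q)] at h5
      have h6 : L ((c * p) * q) m - L (c * (p * q)) m
          = (R (c * p) (L q m) + L ((c * p) * q) m - L (c * (p * q)) m) - R (c * p) (L q m) := by
        abel
      rw [h6, h5]
    -- basis commutation
    have hbase : ∀ j : Fin 8, R (e j) m = L (e j) m := by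
      have half : ∀ u v : M, u + u = v + v → v = u := by
        intro u v huv
        rw [← two_smul ℝ, ← two_smul ℝ] at huv
        have h7 := congrArg (fun w : M => (2⁻¹ : ℝ) • w) huv
        simpa [smul_smul] using h7.symm
      have inst : ∀ (l : Fin 8) (c' p' q' : Octonion),
          (c' * p') * q' = e l → c' * (p' * q') = -(e l) → R (e l) m = L (e l) m := by
        intro l c' p' q' ha hb
        have h8 := hstar c' p' q'
        rw [ha, hb, map_neg, map_neg, LinearMap.neg_apply, LinearMap.neg_apply,
          sub_neg_eq_add, sub_neg_eq_add] at h8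
        exact half _ _ h8
      have base0 : R (e 0) m = L (e 0) m := by rw [e_zero_eq_one, hL1, hR1]
      intro j
      fin_cases j
      · exact base0
      · exact inst 1 (e 2) (e 5) (e 6) trip1a trip1b
      · exact inst 2 (e 1) (e 4) (e 7) trip2a trip2b
      · exact inst 3 (e 1) (e 6) (e 4) trip3a trip3b
      · exact inst 4 (e 1) (e 3) (e 6) trip4a trip4b
      · exact inst 5 (e 1) (e 2) (e 6) trip5a trip5b
      · exact inst 6 (e 1) (e 4) (e 3) trip6a trip6b
      · exact inst 7 (e 1) (e 2) (e 4) trip7a trip7b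
    have hD : ∀ b : Octonion, R b m = L b m := by
      intro b
      rw [show b = ∑ j : Fin 8, coord b j • e j from decomp b]
      simp only [map_sum, LinearMap.sum_apply, map_smul, LinearMap.smul_apply]
      exact Finset.sum_congr rfl fun j _ => by rw [hbase j]
    have hCollapse : ∀ a b : Octonion, R b (L a m) = L (a * b) m := by
      intro a b
      rw [hRL b a, hD b, ← h a b]
    -- `ReM` on the cyclic submodule generated by `m`
    have hReL : ∀ z : Octonion, ReM (L z m) = re z • m := by
      intro z
      rw [hRe]
      have hterm : ∀ i : Fin 7,
          R (e i.succ) (L (e i.succ) (L z m)) = L ((e i.succ * z) * e i.succ) m := by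
        intro i
        rw [← h (e i.succ) z, hCollapse]
      rw [Finset.sum_congr rfl fun i _ => hterm i, ← LinearMap.sum_apply, ← map_sum, key_sum,
        map_sub, map_smul, map_smul, LinearMap.sub_apply, LinearMap.smul_apply,
        LinearMap.smul_apply, hL1]
      module
    refine ⟨?_, ?_, ?_, ?_⟩
    · rw [← h (p * q) c, ← h q c, ← h p (q * c), hReSub, hReL, hReL, re_mul_assoc, sub_self]
    · rw [← h p c, hCollapse c p, hReSub, hReL, hReL, re_mul_comm, sub_self]
    · rw [← h (p * q) c, ← h q c, hCollapse (q * c) p, hReL, hReL, re_mul_assoc,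
        re_mul_comm p (q * c)]
    · rw [← h q c, hCollapse (q * c) p, hCollapse c (p * q), hReL, hReL,
        re_mul_comm (q * c) p, ← re_mul_assoc, re_mul_comm (p * q) c]
  -- extend to all of `M` by the spanning assumption
  suffices H : ∀ x : M, ∀ p q : Octonion,
      ReM (L (p * q) x - L p (L q x)) = 0 ∧
      ReM (L p x - R p x) = 0 ∧
      ReM (L (p * q) x) = ReM (R p (L q x)) ∧
      ReM (R p (L q x)) = ReM (R (p * q) x) by
    exact fun p q x => H x p q
  intro x
  refine Submodule.span_induction (p := fun y _ => ∀ p q : Octonion,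
      ReM (L (p * q) y - L p (L q y)) = 0 ∧
      ReM (L p y - R p y) = 0 ∧
      ReM (L (p * q) y) = ReM (R p (L q y)) ∧
      ReM (R p (L q y)) = ReM (R (p * q) y)) ?_ ?_ ?_ ?_ (hspan x)
  · rintro y ⟨c, m, hm, rfl⟩ p q
    exact key m hm c p q
  · intro p q
    simp [hReZero]
  · rintro y z - - Hy Hz p q
    obtain ⟨hy1, hy2, hy3, hy4⟩ := Hy p q
    obtain ⟨hz1, hz2, hz3, hz4⟩ := Hz p q
    refine ⟨?_, ?_, ?_, ?_⟩
    · have e1 : L (p * q) (y + z) - L p (L q (y + z))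
          = (L (p * q) y - L p (L q y)) + (L (p * q) z - L p (L q z)) := by
        simp only [map_add]; abel
      rw [e1, hReAdd, hy1, hz1, add_zero]
    · have e2 : L p (y + z) - R p (y + z) = (L p y - R p y) + (L p z - R p z) := by
        simp only [map_add]; abel
      rw [e2, hReAdd, hy2, hz2, add_zero]
    · simp only [map_add]
      rw [hReAdd, hReAdd, hy3, hz3]
    · simp only [map_add]
      rw [hReAdd, hReAdd, hy4, hz4]
  · rintro r y - Hy p q
    obtain ⟨hy1, hy2, hy3, hy4⟩ := Hy p q
    refine ⟨?_, ?_, ?_, ?_⟩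
    · have e1 : L (p * q) (r • y) - L p (L q (r • y))
          = r • (L (p * q) y - L p (L q y)) := by
        simp only [map_smul, smul_sub]
      rw [e1, hReSmul, hy1, smul_zero]
    · have e2 : L p (r • y) - R p (r • y) = r • (L p y - R p y) := by
        simp only [map_smul, smul_sub]
      rw [e2, hReSmul, hy2, smul_zero]
    · simp only [map_smul]
      rw [hReSmul, hReSmul, hy3]
    · simp only [map_smul]
      rw [hReSmul, hReSmul, hy4]
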